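/- For n ≥ 2 and k ≥ 3 with 2(n-1) = k(k-1), there is no family C of n² cliques of size k in the n×n rook graph such that any two distinct cliques in C share at most one vertex. -/

import Mathlib

open Finset

/-- Lines of the rook board: `inl i` is row `i`, `inr j` is column `j`. -/
def rline (n : ℕ) : Fin n ⊕ Fin n → Finset (Fin n × Fin n)
  | .inl i => {i} ×ˢ Finset.univ
  | .inr j => Finset.univ ×ˢ {j}

lemma rline_card (n : ℕ) (l : Fin n ⊕ Fin n) : (rline n l).card = n := by
  cases l <;> simp [rline]

lemma two_le_card {α : Type*} [DecidableEq α] {a b : α} {s : Finset α} (ha : a ∈ s)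
    (hb : b ∈ s) (hab : a ≠ b) : 2 ≤ s.card := by
  have hsub : ({a, b} : Finset α) ⊆ s := by
    intro x hx
    simp only [mem_insert, mem_singleton] at hx
    rcases hx with rfl | rfl <;> assumption
  calc 2 = ({a, b} : Finset α).card := (Finset.card_pair hab).symm
    _ ≤ s.card := Finset.card_le_card hsub

/-- Every clique of size `≥ 2` in the rook graph lies in a single row or column. -/
lemma clique_line {n : ℕ} (K : Finset (Fin n × Fin n)) (hcard : 2 ≤ K.card)
    (hcl : ∀ a ∈ K, ∀ b ∈ K, a ≠ b → a.1 = b.1 ∨ a.2 = b.2) :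
    ∃ l, K ⊆ rline n l := by
  obtain ⟨a, ha, b, hb, hab⟩ := Finset.one_lt_card.mp hcard
  rcases hcl a ha b hb hab with h1 | h2
  · refine ⟨Sum.inl a.1, fun p hp => ?_⟩
    simp only [rline, Finset.mem_product, Finset.mem_singleton, Finset.mem_univ, and_true]
    by_cases hpa : p = a
    · rw [hpa]
    by_cases hpb : p = b
    · rw [hpb, ← h1]
    rcases hcl p hp a ha hpa with h' | h'
    · exact h'
    rcases hcl p hp b hb hpb with h'' | h''
    · rw [h'', ← h1]
    · exact absurd (Prod.ext h1 (h'.symm.trans h'')) hab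
  · refine ⟨Sum.inr a.2, fun p hp => ?_⟩
    simp only [rline, Finset.mem_product, Finset.mem_singleton, Finset.mem_univ, true_and]
    by_cases hpa : p = a
    · rw [hpa]
    by_cases hpb : p = b
    · rw [hpb, ← h2]
    rcases hcl p hp a ha hpa with h' | h'
    swap
    · exact h'
    rcases hcl p hp b hb hpb with h'' | h''
    · exact absurd (Prod.ext (h'.symm.trans h'') h2) hab
    · rw [h'', ← h2]

lemma mul_self_sub (m : ℕ) : m * m - m = m * (m - 1) := by
  cases m with
  | zero => rfl
  | succ s => rw [Nat.succ_sub_one, Nat.mul_succ]; omega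

/-- For `n ≥ 2`, `k ≥ 3` with `2(n-1) = k(k-1)`, there is no family of `n²` many
`k`-cliques in the `n × n` rook graph pairwise sharing at most one vertex. -/
theorem stmt_16 (n k : ℕ) (hn : 2 ≤ n) (hk : 3 ≤ k) (h : 2 * (n - 1) = k * (k - 1)) :
    ¬ ∃ C : Finset (Finset (Fin n × Fin n)),
        C.card = n ^ 2 ∧
        (∀ K ∈ C, K.card = k ∧ ∀ a ∈ K, ∀ b ∈ K, a ≠ b → a.1 = b.1 ∨ a.2 = b.2) ∧
        (∀ K₁ ∈ C, ∀ K₂ ∈ C, K₁ ≠ K₂ → (K₁ ∩ K₂).card ≤ 1) := by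
  classical
  obtain ⟨N, rfl⟩ : ∃ N, n = N + 2 := ⟨n - 2, by omega⟩
  obtain ⟨M, rfl⟩ : ∃ M, k = M + 3 := ⟨k - 3, by omega⟩
  have h' : 2 * (N + 1) = (M + 3) * (M + 2) := by
    rw [show N + 2 - 1 = N + 1 from rfl, show M + 3 - 1 = M + 2 from rfl] at h
    exact h
  -- k < n
  have hkn : M + 3 ≤ N + 1 := by nlinarith [h']
  rintro ⟨C, hCcard, hKprop, hint⟩
  let α := (Fin (N + 2) × Fin (N + 2))
  -- intersecting pair lemma
  have hint2 : ∀ K₁ ∈ C, ∀ K₂ ∈ C, K₁ ≠ K₂ → ∀ a b : α, a ∈ K₁ → a ∈ K₂ → b ∈ K₁ → b ∈ K₂ →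
      a = b := by
    intro K₁ h₁ K₂ h₂ hne a b ha1 ha2 hb1 hb2
    by_contra hab
    have : 2 ≤ (K₁ ∩ K₂).card :=
      two_le_card (Finset.mem_inter.mpr ⟨ha1, ha2⟩) (Finset.mem_inter.mpr ⟨hb1, hb2⟩) hab
    have := hint K₁ h₁ K₂ h₂ hne
    omega
  -- choose a line for each clique
  have hch : ∀ K : Finset α, ∃ l, K ∈ C → K ⊆ rline (N + 2) l := by
    intro K
    by_cases hKC : K ∈ C
    · obtain ⟨l, hl⟩ := clique_line K (by have := (hKprop K hKC).1; omega) (hKprop K hKC).2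
      exact ⟨l, fun _ => hl⟩
    · exact ⟨Sum.inl 0, fun hc => absurd hc hKC⟩
  choose f hf using hch
  set F : (Fin (N + 2) ⊕ Fin (N + 2)) → Finset (Finset α) :=
    fun l => C.filter (fun K => f K = l) with hF
  have hFsub : ∀ l, F l ⊆ C := fun l => Finset.filter_subset _ _
  have hFline : ∀ l, ∀ K ∈ F l, K ⊆ rline (N + 2) l := by
    intro l K hKF
    rw [hF, Finset.mem_filter] at hKF
    rw [← hKF.2]
    exact hf K hKF.1
  -- the off-diagonals of cliques in a fiber are pairwise disjoint
  have hdisj : ∀ l, ∀ K₁ ∈ F l, ∀ K₂ ∈ F l, K₁ ≠ K₂ → Disjoint K₁.offDiag K₂.offDiag := by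
    intro l K₁ h₁ K₂ h₂ hne
    rw [Finset.disjoint_left]
    rintro ⟨a, b⟩ hm1 hm2
    rw [Finset.mem_offDiag] at hm1 hm2
    exact hm1.2.2 (hint2 K₁ (hFsub l h₁) K₂ (hFsub l h₂) hne a b hm1.1 hm2.1 hm1.2.1 hm2.2.1)
  -- the count of off-diagonal pairs in each fiber
  have hbU : ∀ l, ((F l).biUnion Finset.offDiag).card = (F l).card * (2 * (N + 1)) := by
    intro l
    rw [Finset.card_biUnion (hdisj l)]
    rw [Finset.sum_congr rfl (fun K hKF => ?_), Finset.sum_const, smul_eq_mul]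
    rw [Finset.offDiag_card, (hKprop K (hFsub l hKF)).1, mul_self_sub]
    omega
  have hbUsub : ∀ l, (F l).biUnion Finset.offDiag ⊆ (rline (N + 2) l).offDiag := by
    intro l x hx
    rw [Finset.mem_biUnion] at hx
    obtain ⟨K, hKF, hxK⟩ := hx
    rw [Finset.mem_offDiag] at hxK ⊢
    exact ⟨hFline l K hKF hxK.1, hFline l K hKF hxK.2.1, hxK.2.2⟩
  have hlineOff : ∀ l, ((rline (N + 2) l).offDiag).card = (N + 2) * (N + 1) := by
    intro l
    rw [Finset.offDiag_card, rline_card, mul_self_sub, show N + 2 - 1 = N + 1 from rfl]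
  -- per-line bound
  have hm : ∀ l, 2 * (F l).card ≤ N + 2 := by
    intro l
    have h1 : (F l).card * (2 * (N + 1)) ≤ (N + 2) * (N + 1) := by
      rw [← hbU l, ← hlineOff l]
      exact Finset.card_le_card (hbUsub l)
    have h2 : (2 * (F l).card) * (N + 1) ≤ (N + 2) * (N + 1) := by
      calc (2 * (F l).card) * (N + 1) = (F l).card * (2 * (N + 1)) := by ring
        _ ≤ (N + 2) * (N + 1) := h1
    exact Nat.le_of_mul_le_mul_right h2 (by omega)
  -- total count
  have hsum : ∑ l : Fin (N + 2) ⊕ Fin (N + 2), (F l).card = (N + 2) ^ 2 := by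
    rw [← hCcard]
    exact (Finset.card_eq_sum_card_fiberwise (fun K _ => Finset.mem_univ (f K))).symm
  -- equality per line
  have hEq : ∀ l, 2 * (F l).card = N + 2 := by
    by_contra hc
    push_neg at hc
    obtain ⟨l₀, hl₀⟩ := hc
    have hlt : ∑ l : Fin (N + 2) ⊕ Fin (N + 2), 2 * (F l).card <
        ∑ _l : Fin (N + 2) ⊕ Fin (N + 2), (N + 2) :=
      Finset.sum_lt_sum (fun i _ => hm i) ⟨l₀, Finset.mem_univ _, lt_of_le_of_ne (hm l₀) hl₀⟩
    rw [← Finset.mul_sum, hsum, Finset.sum_const, smul_eq_mul] at hlt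
    simp only [Finset.card_univ, Fintype.card_sum, Fintype.card_fin] at hlt
    have : (N + 2) ^ 2 = (N + 2) * (N + 2) := sq (N + 2) ▸ by ring
    nlinarith [hlt]
  -- focus on row 0
  set l₀ : Fin (N + 2) ⊕ Fin (N + 2) := Sum.inl 0 with hl₀def
  set L : Finset α := rline (N + 2) l₀ with hLdef
  set F0 : Finset (Finset α) := F l₀ with hF0
  -- exact covering of pairs on line l₀
  have hcover : ∀ a ∈ L, ∀ b ∈ L, a ≠ b → ∃ K ∈ F0, a ∈ K ∧ b ∈ K := by
    intro a ha b hb hab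
    have hcards : (F0.biUnion Finset.offDiag).card = L.offDiag.card := by
      rw [hbU l₀, hlineOff l₀, show (F l₀).card * (2 * (N + 1)) = (2 * (F l₀).card) * (N + 1)
        from by ring, hEq l₀]
    have heq : F0.biUnion Finset.offDiag = L.offDiag :=
      Finset.eq_of_subset_of_card_le (hbUsub l₀) (le_of_eq hcards.symm)
    have : (a, b) ∈ F0.biUnion Finset.offDiag := by
      rw [heq, Finset.mem_offDiag]
      exact ⟨ha, hb, hab⟩
    rw [Finset.mem_biUnion] at this
    obtain ⟨K, hKF, hxK⟩ := this
    rw [Finset.mem_offDiag] at hxK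
    exact ⟨K, hKF, hxK.1, hxK.2.1⟩
  -- the point p
  set p : α := ((0 : Fin (N + 2)), (0 : Fin (N + 2))) with hpdef
  have hpL : p ∈ L := by simp [hLdef, hl₀def, rline, hpdef]
  set Fp : Finset (Finset α) := F0.filter (fun K => p ∈ K) with hFp
  -- bound on cliques through p
  have hFpbound : 2 * Fp.card ≤ M + 3 := by
    have hdisj' : ∀ K₁ ∈ Fp, ∀ K₂ ∈ Fp, K₁ ≠ K₂ → Disjoint (K₁.erase p) (K₂.erase p) := by
      intro K₁ h₁ K₂ h₂ hne
      rw [hFp, Finset.mem_filter] at h₁ h₂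
      rw [Finset.disjoint_left]
      intro q hq1 hq2
      rw [Finset.mem_erase] at hq1 hq2
      exact hq1.1 (hint2 K₁ (hFsub l₀ h₁.1) K₂ (hFsub l₀ h₂.1) hne q p hq1.2 hq2.2 h₁.2 h₂.2)
    have hcardsum : (Fp.biUnion (fun K => K.erase p)).card = Fp.card * (M + 2) := by
      rw [Finset.card_biUnion hdisj']
      rw [Finset.sum_congr rfl (fun K hKF => ?_), Finset.sum_const, smul_eq_mul]
      rw [hFp, Finset.mem_filter] at hKF
      rw [Finset.card_erase_of_mem hKF.2, (hKprop K (hFsub l₀ hKF.1)).1]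
      omega

    have hsubset : Fp.biUnion (fun K => K.erase p) ⊆ L.erase p := by
      intro q hq
      rw [Finset.mem_biUnion] at hq
      obtain ⟨K, hKF, hqK⟩ := hq
      rw [hFp, Finset.mem_filter] at hKF
      rw [Finset.mem_erase] at hqK ⊢
      exact ⟨hqK.1, hFline l₀ K hKF.1 hqK.2⟩
    have h1 : Fp.card * (M + 2) ≤ N + 1 := by
      rw [← hcardsum]
      calc (Fp.biUnion (fun K => K.erase p)).card ≤ (L.erase p).card :=
            Finset.card_le_card hsubset
        _ = N + 1 := by rw [Finset.card_erase_of_mem hpL, hLdef, rline_card]; omega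
    have h2 : (2 * Fp.card) * (M + 2) ≤ (M + 3) * (M + 2) := by
      calc (2 * Fp.card) * (M + 2) = 2 * (Fp.card * (M + 2)) := by ring
        _ ≤ 2 * (N + 1) := by omega
        _ = (M + 3) * (M + 2) := h'
    exact Nat.le_of_mul_le_mul_right h2 (by omega)
  -- there is a clique in F0 avoiding p
  have hFpsub : Fp ⊆ F0 := Finset.filter_subset _ _
  have hex : ∃ B ∈ F0, p ∉ B := by
    have hcardlt : Fp.card < F0.card := by
      have := hEq l₀
      rw [← hF0] at this
      omega
    have hne : (F0 \ Fp).Nonempty := by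
      rw [← Finset.card_pos, Finset.card_sdiff_of_subset hFpsub]
      omega
    obtain ⟨B, hB⟩ := hne
    rw [Finset.mem_sdiff] at hB
    exact ⟨B, hB.1, fun hc => hB.2 (Finset.mem_filter.mpr ⟨hB.1, hc⟩)⟩
  obtain ⟨B, hBF, hpB⟩ := hex
  have hBL : B ⊆ L := hFline l₀ B hBF
  have hBcard : B.card = M + 3 := (hKprop B (hFsub l₀ hBF)).1
  -- each point of B gives a distinct clique through p
  have hgex : ∀ q : α, ∃ K, q ∈ B → K ∈ Fp ∧ q ∈ K := by
    intro q
    by_cases hqB : q ∈ B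
    · have hqp : p ≠ q := fun e => hpB (e ▸ hqB)
      obtain ⟨K, hKF, hpK, hqK⟩ := hcover p hpL q (hBL hqB) hqp
      exact ⟨K, fun _ => ⟨Finset.mem_filter.mpr ⟨hKF, hpK⟩, hqK⟩⟩
    · exact ⟨∅, fun hc => absurd hc hqB⟩
  choose g hg using hgex
  have hinj : Set.InjOn g ↑B := by
    intro q₁ hq₁ q₂ hq₂ hgeq
    by_contra hne
    obtain ⟨hK₁, hq₁K⟩ := hg q₁ hq₁
    obtain ⟨hK₂, hq₂K⟩ := hg q₂ hq₂
    rw [hFp, Finset.mem_filter] at hK₁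
    have hKB : g q₁ ≠ B := fun e => hpB (e ▸ hK₁.2)
    have := hint2 (g q₁) (hFsub l₀ hK₁.1) B (hFsub l₀ hBF) hKB q₁ q₂ hq₁K hq₁
      (hgeq ▸ hq₂K) hq₂
    exact hne this
  have hle : B.card ≤ Fp.card :=
    Finset.card_le_card_of_injOn g (fun q hq => (hg q hq).1) hinj
  omega
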